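/- Let l ≥ 2, let t, c̃, d̃, α₃, …, α_l be real numbers, and let W̃₃ be the l×l quaternion matrix c̃·E₁₂ + d̃·jG₁ − t·d̃·jG₂ + Σ_{q=3}^{l} α_q·iG_q, where E₁₂ has 1 in entry (1,2), −1 in entry (2,1), zeros elsewhere, and G_q has √2 in entry (q,q) and zeros elsewhere. Then the characteristic polynomial of the 2l×2l complex matrix dπ(W̃₃) equals (λ⁴ + 2(c̃² + d̃² + d̃²t²)λ² + (c̃² + 2d̃²t)²)·∏_{q=3}^{l}(λ² + 2α_q²). -/

import Mathlib

open Quaternion Matrix Polynomial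

/-- The quaternion unit `i`. -/
noncomputable def qi : ℍ[ℝ] := ⟨0, 1, 0, 0⟩
/-- The quaternion unit `j`. -/
noncomputable def qj : ℍ[ℝ] := ⟨0, 0, 1, 0⟩

/-- `G_q`: the `l × l` quaternion matrix with `√2` in entry `(q,q)` and zeros elsewhere. -/
noncomputable def Gmat (l : ℕ) (q : Fin l) : Matrix (Fin l) (Fin l) ℍ[ℝ] :=
  Matrix.single q q (((Real.sqrt 2 : ℝ) : ℍ[ℝ]))

/-- `E₁₂`: the `l × l` quaternion matrix with `1` in entry `(1,2)`, `−1` in entry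
`(2,1)` and zeros elsewhere. -/
noncomputable def Emat (l : ℕ) [NeZero l] (i j : Fin l) : Matrix (Fin l) (Fin l) ℍ[ℝ] :=
  Matrix.single i j 1 - Matrix.single j i 1

/-- The complex matrix `X` in the unique decomposition `W = X + jY` of a quaternion
matrix `W` (identifying `ℂ` with the real span of `1` and `i` in `ℍ`). -/
noncomputable def quatX (l : ℕ) (W : Matrix (Fin l) (Fin l) ℍ[ℝ]) :
    Matrix (Fin l) (Fin l) ℂ :=
  fun p q => ⟨(W p q).re, (W p q).imI⟩

/-- The complex matrix `Y` in the unique decomposition `W = X + jY` of a quaternion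
matrix `W`. -/
noncomputable def quatY (l : ℕ) (W : Matrix (Fin l) (Fin l) ℍ[ℝ]) :
    Matrix (Fin l) (Fin l) ℂ :=
  fun p q => ⟨(W p q).imJ, -(W p q).imK⟩

/-- The embedding `dπ : M_l(ℍ) → M_{2l}(ℂ)`, `W = X + jY ↦ [[X, −conj Y], [Y, conj X]]`. -/
noncomputable def dpi (l : ℕ) (W : Matrix (Fin l) (Fin l) ℍ[ℝ]) :
    Matrix (Fin l ⊕ Fin l) (Fin l ⊕ Fin l) ℂ :=
  Matrix.fromBlocks (quatX l W) (-(quatY l W).map (starRingEnd ℂ))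
    (quatY l W) ((quatX l W).map (starRingEnd ℂ))

lemma qi_mul_re (r : ℝ) : (qi * (r : ℍ[ℝ])).re = 0 := by
  rw [Quaternion.re_mul]; simp [qi]
lemma qi_mul_imI (r : ℝ) : (qi * (r : ℍ[ℝ])).imI = r := by
  rw [Quaternion.imI_mul]; simp [qi]
lemma qi_mul_imJ (r : ℝ) : (qi * (r : ℍ[ℝ])).imJ = 0 := by
  rw [Quaternion.imJ_mul]; simp [qi]
lemma qi_mul_imK (r : ℝ) : (qi * (r : ℍ[ℝ])).imK = 0 := by
  rw [Quaternion.imK_mul]; simp [qi]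
lemma qj_mul_re (r : ℝ) : (qj * (r : ℍ[ℝ])).re = 0 := by
  rw [Quaternion.re_mul]; simp [qj]
lemma qj_mul_imI (r : ℝ) : (qj * (r : ℍ[ℝ])).imI = 0 := by
  rw [Quaternion.imI_mul]; simp [qj]
lemma qj_mul_imJ (r : ℝ) : (qj * (r : ℍ[ℝ])).imJ = r := by
  rw [Quaternion.imJ_mul]; simp [qj]
lemma qj_mul_imK (r : ℝ) : (qj * (r : ℍ[ℝ])).imK = 0 := by
  rw [Quaternion.imK_mul]; simp [qj]

lemma qi_re : qi.re = 0 := rfl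
lemma qi_imI : qi.imI = 1 := rfl
lemma qi_imJ : qi.imJ = 0 := rfl
lemma qi_imK : qi.imK = 0 := rfl
lemma qj_re : qj.re = 0 := rfl
lemma qj_imI : qj.imI = 0 := rfl
lemma qj_imJ : qj.imJ = 1 := rfl
lemma qj_imK : qj.imK = 0 := rfl


lemma aux4 (a b c : ℂ) :
    (!![0,a,-b,0; -a,0,0,c; b,0,0,a; 0,-c,-a,0] : Matrix (Fin 4) (Fin 4) ℂ).charpoly
      = X^4 + C (2*a^2+b^2+c^2) * X^2 + C ((a^2+b*c)^2) := by
  rw [Matrix.charpoly]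
  have h : charmatrix (!![0,a,-b,0; -a,0,0,c; b,0,0,a; 0,-c,-a,0] : Matrix (Fin 4) (Fin 4) ℂ)
      = !![X, -C a, C b, 0; C a, X, 0, -C c; -C b, 0, X, -C a; 0, C c, C a, X] := by
    ext i j
    fin_cases i <;> fin_cases j <;> simp [charmatrix_apply]
  rw [h]
  simp [Matrix.det_succ_row_zero, Fin.sum_univ_succ]
  simp +decide [Fin.succAbove]
  simp only [map_ofNat, _root_.map_mul, _root_.map_add, map_pow]
  ring

lemma auxdiag {n : Type*} [Fintype n] [DecidableEq n] (d : n → ℂ) :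
    (Matrix.diagonal d).charpoly = ∏ i, (X - C (d i)) := by
  have h : charmatrix (Matrix.diagonal d) = Matrix.diagonal (fun i => X - C (d i)) := by
    ext i j
    by_cases h : i = j <;> simp [charmatrix_apply, Matrix.diagonal_apply, h]
  rw [Matrix.charpoly, h, Matrix.det_diagonal]

/-- index embedding Fin m → Fin (m+2), q ↦ q+2 -/
def i2 (m : ℕ) (q : Fin m) : Fin (m+2) := ⟨q.1 + 2, by omega⟩

noncomputable def blockA (a b c : ℝ) : Matrix (Fin 2 ⊕ Fin 2) (Fin 2 ⊕ Fin 2) ℂ :=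
  Matrix.fromBlocks !![0, (a:ℂ); -(a:ℂ), 0] !![-(b:ℂ), 0; 0, (c:ℂ)]
    !![(b:ℂ), 0; 0, -(c:ℂ)] !![0, (a:ℂ); -(a:ℂ), 0]

noncomputable def dvec (m : ℕ) (α : Fin (m+2) → ℝ) : Fin m ⊕ Fin m → ℂ :=
  Sum.elim (fun q => Complex.I * ((α (i2 m q) * Real.sqrt 2 : ℝ) : ℂ))
    (fun q => -(Complex.I * ((α (i2 m q) * Real.sqrt 2 : ℝ) : ℂ)))

lemma blockA_charpoly (a b c : ℝ) :
    (blockA a b c).charpoly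
      = X^4 + C ((2*(a:ℂ)^2+(b:ℂ)^2+(c:ℂ)^2)) * X^2 + C (((a:ℂ)^2+(b:ℂ)*(c:ℂ))^2) := by
  rw [← Matrix.charpoly_reindex finSumFinEquiv (blockA a b c)]
  have h : (Matrix.reindex finSumFinEquiv finSumFinEquiv (blockA a b c))
      = !![0,(a:ℂ),-(b:ℂ),0; -(a:ℂ),0,0,(c:ℂ); (b:ℂ),0,0,(a:ℂ); 0,-(c:ℂ),-(a:ℂ),0] := by
    ext i j
    fin_cases i <;> fin_cases j <;>
      norm_num [blockA, Matrix.reindex_apply, finSumFinEquiv, Fin.addCases, Fin.lt_def,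
        Matrix.fromBlocks, Fin.subNat, Fin.castLT, Fin.mk_zero, Fin.mk_one]
  rw [h, aux4]

lemma dvec_charpoly (m : ℕ) (α : Fin (m+2) → ℝ) :
    (Matrix.diagonal (dvec m α)).charpoly
      = ∏ q : Fin m, (X^2 + C (((2 * (α (i2 m q))^2 : ℝ) : ℂ))) := by
  rw [auxdiag, Fintype.prod_sum_type, ← Finset.prod_mul_distrib]
  refine Finset.prod_congr rfl fun q _ => ?_
  have key : (dvec m α (Sum.inl q))^2 = -((2 * (α (i2 m q))^2 : ℝ) : ℂ) := by
    simp only [dvec, Sum.elim_inl, mul_pow, Complex.I_sq, ← Complex.ofReal_pow]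
    have h2 : (Real.sqrt 2)^2 = 2 := Real.sq_sqrt (by norm_num)
    rw [h2]
    push_cast
    ring
  have : (X - C (dvec m α (Sum.inl q))) * (X - C (dvec m α (Sum.inr q)))
      = X^2 - C ((dvec m α (Sum.inl q))^2) := by
    simp only [dvec, Sum.elim_inl, Sum.elim_inr, map_neg, map_pow]
    ring
  rw [this, key, map_neg, sub_neg_eq_add]


def e2 (m : ℕ) : Fin 2 ⊕ Fin m ≃ Fin (m + 2) :=
  finSumFinEquiv.trans (finCongr (Nat.add_comm 2 m))

def eAll (m : ℕ) : Fin (m+2) ⊕ Fin (m+2) ≃ (Fin 2 ⊕ Fin 2) ⊕ (Fin m ⊕ Fin m) :=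
  ((e2 m).sumCongr (e2 m)).symm.trans (Equiv.sumSumSumComm (Fin 2) (Fin m) (Fin 2) (Fin m))

lemma e2_inl_0 (m : ℕ) : e2 m (Sum.inl 0) = 0 := by
  apply Fin.ext; simp [e2, finSumFinEquiv]
lemma e2_inl_1 (m : ℕ) : e2 m (Sum.inl 1) = 1 := by
  apply Fin.ext; simp [e2, finSumFinEquiv]
lemma e2_inr (m : ℕ) (q : Fin m) : e2 m (Sum.inr q) = i2 m q := by
  apply Fin.ext; simp [e2, finSumFinEquiv, i2]

lemma eAll_symm_ll (m : ℕ) (i : Fin 2) :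
    (eAll m).symm (Sum.inl (Sum.inl i)) = Sum.inl (e2 m (Sum.inl i)) := rfl
lemma eAll_symm_lr (m : ℕ) (i : Fin 2) :
    (eAll m).symm (Sum.inl (Sum.inr i)) = Sum.inr (e2 m (Sum.inl i)) := rfl
lemma eAll_symm_rl (m : ℕ) (q : Fin m) :
    (eAll m).symm (Sum.inr (Sum.inl q)) = Sum.inl (e2 m (Sum.inr q)) := rfl
lemma eAll_symm_rr (m : ℕ) (q : Fin m) :
    (eAll m).symm (Sum.inr (Sum.inr q)) = Sum.inr (e2 m (Sum.inr q)) := rfl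

/-- Statement 16 (item 3) of Proposition `char` of the paper): the characteristic
polynomial of `dπ(W̃₃)` for `W̃₃ = c̃·E₁₂ + d̃·jG₁ − t·d̃·jG₂ + Σ_{q=3}^{l} α_q·iG_q`
(in the paper `t = (x₂ − x₁)/x₁`, but the identity holds for every real `t`).
Here `l = m + 2 ≥ 2` and the index `q = 1, …, l` of the paper corresponds to
`q : Fin (m + 2)`, the first index being `0`. -/
theorem stmt_16 (m : ℕ) (t ct dt : ℝ) (α : Fin (m + 2) → ℝ)
    (W : Matrix (Fin (m + 2)) (Fin (m + 2)) ℍ[ℝ])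
    (hW : W = ct • Emat (m + 2) 0 1 + dt • (qj • Gmat (m + 2) 0) -
      (t * dt) • (qj • Gmat (m + 2) 1) +
      ∑ q ∈ Finset.univ \ {0, 1}, α q • (qi • Gmat (m + 2) q)) :
    (dpi (m + 2) W).charpoly =
      (X ^ 4 + C ((2 * (ct ^ 2 + dt ^ 2 + dt ^ 2 * t ^ 2) : ℝ) : ℂ) * X ^ 2 +
          C (((ct ^ 2 + 2 * dt ^ 2 * t) ^ 2 : ℝ) : ℂ)) *
        ∏ q ∈ Finset.univ \ {0, 1}, (X ^ 2 + C ((2 * (α q) ^ 2 : ℝ) : ℂ)) := by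
  classical
  have h2 : (Real.sqrt 2)^2 = 2 := Real.sq_sqrt (by norm_num)
  have hc2 : ((Real.sqrt 2 : ℝ) : ℂ)^2 = 2 := by
    rw [← Complex.ofReal_pow, h2]; norm_num
  -- entrywise description of W
  have hent : ∀ p q : Fin (m+2), W p q =
      (ct • ((if (0:Fin (m+2)) = p ∧ (1:Fin (m+2)) = q then (1:ℍ[ℝ]) else 0)
          - if (1:Fin (m+2)) = p ∧ (0:Fin (m+2)) = q then 1 else 0)
        + if (0:Fin (m+2)) = p ∧ (0:Fin (m+2)) = q then
            dt • (qj * ((Real.sqrt 2:ℝ):ℍ[ℝ])) else 0)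
      - (if (1:Fin (m+2)) = p ∧ (1:Fin (m+2)) = q then
            (t*dt) • (qj * ((Real.sqrt 2:ℝ):ℍ[ℝ])) else 0)
      + (if p = q ∧ ¬(p = 0 ∨ p = 1) then α p • (qi * ((Real.sqrt 2:ℝ):ℍ[ℝ])) else 0) := by
    intro p q
    rw [hW]
    simp only [Matrix.add_apply, Matrix.sub_apply, Matrix.smul_apply, Matrix.sum_apply,
      Emat, Gmat, Matrix.single, Matrix.of_apply, smul_ite, smul_zero, smul_eq_mul,
      mul_ite, mul_zero]
    congr 1
    by_cases hpq : p = q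
    · subst hpq
      simp only [and_self]
      rw [Finset.sum_ite_eq' (Finset.univ \ ({0,1} : Finset (Fin (m+2)))) p
        (fun x => α x • (qi * ((Real.sqrt 2:ℝ):ℍ[ℝ])))]
      simp [Finset.mem_sdiff]
    · rw [Finset.sum_eq_zero, if_neg (by tauto)]
      intro x hx
      rw [if_neg]
      rintro ⟨h1, h2⟩
      exact hpq (h1 ▸ h2 ▸ rfl)
  rw [← Matrix.charpoly_reindex (eAll m) (dpi (m+2) W)]
  have hblock : (Matrix.reindex (eAll m) (eAll m)) (dpi (m+2) W)
      = Matrix.fromBlocks (blockA ct (dt*Real.sqrt 2) (t*dt*Real.sqrt 2)) 0 0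
          (Matrix.diagonal (dvec m α)) := by
    ext P Q
    have hne0 : ∀ q : Fin m, ¬ ((0:Fin (m+2)) = i2 m q) := by
      intro q h; have := congrArg Fin.val h
      simp only [i2, Fin.val_zero] at this; omega
    have hne1 : ∀ q : Fin m, ¬ ((1:Fin (m+2)) = i2 m q) := by
      intro q h; have := congrArg Fin.val h
      simp only [i2, Fin.val_one] at this; omega
    have h01 : ¬ ((0:Fin (m+2)) = 1) := by
      intro h; have := congrArg Fin.val h
      simp only [Fin.val_zero, Fin.val_one] at this; omega
    have h10 : ¬ ((1:Fin (m+2)) = 0) := fun h => h01 h.symm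
    have hne0' : ∀ q : Fin m, ¬ (i2 m q = 0) := fun q h => hne0 q h.symm
    have hne1' : ∀ q : Fin m, ¬ (i2 m q = 1) := fun q h => hne1 q h.symm
    have hi2eq : ∀ q q' : Fin m, (i2 m q = i2 m q') ↔ q = q' := by
      intro q q'
      constructor
      · intro h; have := congrArg Fin.val h; simp [i2] at this; exact Fin.ext this
      · rintro rfl; rfl
    obtain (i|i)|(q|q) := P <;> obtain (j|j)|(r|r) := Q
    · simp only [Matrix.reindex_apply, Matrix.submatrix_apply, eAll_symm_ll, eAll_symm_lr,
        eAll_symm_rl, eAll_symm_rr, dpi, Matrix.fromBlocks_apply₁₁, Matrix.fromBlocks_apply₁₂,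
        Matrix.fromBlocks_apply₂₁, Matrix.fromBlocks_apply₂₂, Matrix.neg_apply, Matrix.map_apply,
        e2_inr, Matrix.zero_apply, Matrix.diagonal_apply, Sum.inl.injEq, Sum.inr.injEq]
      fin_cases i <;> fin_cases j <;> simp [hent, quatX, quatY, qi_mul_re, qi_mul_imI, qi_mul_imJ, qi_mul_imK, qj_mul_re, qj_mul_imI, qj_mul_imJ, qj_mul_imK, qi_re, qi_imI, qi_imJ, qi_imK, qj_re, qj_imI, qj_imJ, qj_imK, e2_inl_0, e2_inl_1, blockA, dvec, hne0, hne1, hne0', hne1', hi2eq, h01, h10,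
          Complex.ext_iff, Matrix.fromBlocks]
    · simp only [Matrix.reindex_apply, Matrix.submatrix_apply, eAll_symm_ll, eAll_symm_lr,
        eAll_symm_rl, eAll_symm_rr, dpi, Matrix.fromBlocks_apply₁₁, Matrix.fromBlocks_apply₁₂,
        Matrix.fromBlocks_apply₂₁, Matrix.fromBlocks_apply₂₂, Matrix.neg_apply, Matrix.map_apply,
        e2_inr, Matrix.zero_apply, Matrix.diagonal_apply, Sum.inl.injEq, Sum.inr.injEq]
      fin_cases i <;> fin_cases j <;> simp [hent, quatX, quatY, qi_mul_re, qi_mul_imI, qi_mul_imJ, qi_mul_imK, qj_mul_re, qj_mul_imI, qj_mul_imJ, qj_mul_imK, qi_re, qi_imI, qi_imJ, qi_imK, qj_re, qj_imI, qj_imJ, qj_imK, e2_inl_0, e2_inl_1, blockA, dvec, hne0, hne1, hne0', hne1', hi2eq, h01, h10,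
          Complex.ext_iff, Matrix.fromBlocks]
    · simp only [Matrix.reindex_apply, Matrix.submatrix_apply, eAll_symm_ll, eAll_symm_lr,
        eAll_symm_rl, eAll_symm_rr, dpi, Matrix.fromBlocks_apply₁₁, Matrix.fromBlocks_apply₁₂,
        Matrix.fromBlocks_apply₂₁, Matrix.fromBlocks_apply₂₂, Matrix.neg_apply, Matrix.map_apply,
        e2_inr, Matrix.zero_apply, Matrix.diagonal_apply, Sum.inl.injEq, Sum.inr.injEq]
      fin_cases i <;> simp [hent, quatX, quatY, qi, qj, e2_inl_0, e2_inl_1, blockA, dvec, hne0, hne1, hne0', hne1', hi2eq, h01, h10,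
          Complex.ext_iff, Matrix.fromBlocks]
    · simp only [Matrix.reindex_apply, Matrix.submatrix_apply, eAll_symm_ll, eAll_symm_lr,
        eAll_symm_rl, eAll_symm_rr, dpi, Matrix.fromBlocks_apply₁₁, Matrix.fromBlocks_apply₁₂,
        Matrix.fromBlocks_apply₂₁, Matrix.fromBlocks_apply₂₂, Matrix.neg_apply, Matrix.map_apply,
        e2_inr, Matrix.zero_apply, Matrix.diagonal_apply, Sum.inl.injEq, Sum.inr.injEq]
      fin_cases i <;> simp [hent, quatX, quatY, qi, qj, e2_inl_0, e2_inl_1, blockA, dvec, hne0, hne1, hne0', hne1', hi2eq, h01, h10,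
          Complex.ext_iff, Matrix.fromBlocks]
    · simp only [Matrix.reindex_apply, Matrix.submatrix_apply, eAll_symm_ll, eAll_symm_lr,
        eAll_symm_rl, eAll_symm_rr, dpi, Matrix.fromBlocks_apply₁₁, Matrix.fromBlocks_apply₁₂,
        Matrix.fromBlocks_apply₂₁, Matrix.fromBlocks_apply₂₂, Matrix.neg_apply, Matrix.map_apply,
        e2_inr, Matrix.zero_apply, Matrix.diagonal_apply, Sum.inl.injEq, Sum.inr.injEq]
      fin_cases i <;> fin_cases j <;> simp [hent, quatX, quatY, qi_mul_re, qi_mul_imI, qi_mul_imJ, qi_mul_imK, qj_mul_re, qj_mul_imI, qj_mul_imJ, qj_mul_imK, qi_re, qi_imI, qi_imJ, qi_imK, qj_re, qj_imI, qj_imJ, qj_imK, e2_inl_0, e2_inl_1, blockA, dvec, hne0, hne1, hne0', hne1', hi2eq, h01, h10,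
          Complex.ext_iff, Matrix.fromBlocks]
    · simp only [Matrix.reindex_apply, Matrix.submatrix_apply, eAll_symm_ll, eAll_symm_lr,
        eAll_symm_rl, eAll_symm_rr, dpi, Matrix.fromBlocks_apply₁₁, Matrix.fromBlocks_apply₁₂,
        Matrix.fromBlocks_apply₂₁, Matrix.fromBlocks_apply₂₂, Matrix.neg_apply, Matrix.map_apply,
        e2_inr, Matrix.zero_apply, Matrix.diagonal_apply, Sum.inl.injEq, Sum.inr.injEq]
      fin_cases i <;> fin_cases j <;> simp [hent, quatX, quatY, qi_mul_re, qi_mul_imI, qi_mul_imJ, qi_mul_imK, qj_mul_re, qj_mul_imI, qj_mul_imJ, qj_mul_imK, qi_re, qi_imI, qi_imJ, qi_imK, qj_re, qj_imI, qj_imJ, qj_imK, e2_inl_0, e2_inl_1, blockA, dvec, hne0, hne1, hne0', hne1', hi2eq, h01, h10,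
          Complex.ext_iff, Matrix.fromBlocks]
    · simp only [Matrix.reindex_apply, Matrix.submatrix_apply, eAll_symm_ll, eAll_symm_lr,
        eAll_symm_rl, eAll_symm_rr, dpi, Matrix.fromBlocks_apply₁₁, Matrix.fromBlocks_apply₁₂,
        Matrix.fromBlocks_apply₂₁, Matrix.fromBlocks_apply₂₂, Matrix.neg_apply, Matrix.map_apply,
        e2_inr, Matrix.zero_apply, Matrix.diagonal_apply, Sum.inl.injEq, Sum.inr.injEq]
      fin_cases i <;> simp [hent, quatX, quatY, qi, qj, e2_inl_0, e2_inl_1, blockA, dvec, hne0, hne1, hne0', hne1', hi2eq, h01, h10,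
          Complex.ext_iff, Matrix.fromBlocks]
    · simp only [Matrix.reindex_apply, Matrix.submatrix_apply, eAll_symm_ll, eAll_symm_lr,
        eAll_symm_rl, eAll_symm_rr, dpi, Matrix.fromBlocks_apply₁₁, Matrix.fromBlocks_apply₁₂,
        Matrix.fromBlocks_apply₂₁, Matrix.fromBlocks_apply₂₂, Matrix.neg_apply, Matrix.map_apply,
        e2_inr, Matrix.zero_apply, Matrix.diagonal_apply, Sum.inl.injEq, Sum.inr.injEq]
      fin_cases i <;> simp [hent, quatX, quatY, qi, qj, e2_inl_0, e2_inl_1, blockA, dvec, hne0, hne1, hne0', hne1', hi2eq, h01, h10,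
          Complex.ext_iff, Matrix.fromBlocks]
    · simp only [Matrix.reindex_apply, Matrix.submatrix_apply, eAll_symm_ll, eAll_symm_lr,
        eAll_symm_rl, eAll_symm_rr, dpi, Matrix.fromBlocks_apply₁₁, Matrix.fromBlocks_apply₁₂,
        Matrix.fromBlocks_apply₂₁, Matrix.fromBlocks_apply₂₂, Matrix.neg_apply, Matrix.map_apply,
        e2_inr, Matrix.zero_apply, Matrix.diagonal_apply, Sum.inl.injEq, Sum.inr.injEq]
      fin_cases j <;> simp [hent, quatX, quatY, qi, qj, e2_inl_0, e2_inl_1, blockA, dvec, hne0, hne1, hne0', hne1', hi2eq, h01, h10,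
          Complex.ext_iff, Matrix.fromBlocks]
    · simp only [Matrix.reindex_apply, Matrix.submatrix_apply, eAll_symm_ll, eAll_symm_lr,
        eAll_symm_rl, eAll_symm_rr, dpi, Matrix.fromBlocks_apply₁₁, Matrix.fromBlocks_apply₁₂,
        Matrix.fromBlocks_apply₂₁, Matrix.fromBlocks_apply₂₂, Matrix.neg_apply, Matrix.map_apply,
        e2_inr, Matrix.zero_apply, Matrix.diagonal_apply, Sum.inl.injEq, Sum.inr.injEq]
      fin_cases j <;> simp [hent, quatX, quatY, qi, qj, e2_inl_0, e2_inl_1, blockA, dvec, hne0, hne1, hne0', hne1', hi2eq, h01, h10,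
          Complex.ext_iff, Matrix.fromBlocks]
    · simp only [Matrix.reindex_apply, Matrix.submatrix_apply, eAll_symm_ll, eAll_symm_lr,
        eAll_symm_rl, eAll_symm_rr, dpi, Matrix.fromBlocks_apply₁₁, Matrix.fromBlocks_apply₁₂,
        Matrix.fromBlocks_apply₂₁, Matrix.fromBlocks_apply₂₂, Matrix.neg_apply, Matrix.map_apply,
        e2_inr, Matrix.zero_apply, Matrix.diagonal_apply, Sum.inl.injEq, Sum.inr.injEq]
      by_cases hqr : q = r <;>
        simp [hent, quatX, quatY, qi_mul_re, qi_mul_imI, qi_mul_imJ, qi_mul_imK, qj_mul_re, qj_mul_imI, qj_mul_imJ, qj_mul_imK, qi_re, qi_imI, qi_imJ, qi_imK, qj_re, qj_imI, qj_imJ, qj_imK, e2_inl_0, e2_inl_1, blockA, dvec, hne0, hne1, hne0', hne1', hi2eq, h01, h10, hqr,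
          Complex.ext_iff, Matrix.fromBlocks]
    · simp only [Matrix.reindex_apply, Matrix.submatrix_apply, eAll_symm_ll, eAll_symm_lr,
        eAll_symm_rl, eAll_symm_rr, dpi, Matrix.fromBlocks_apply₁₁, Matrix.fromBlocks_apply₁₂,
        Matrix.fromBlocks_apply₂₁, Matrix.fromBlocks_apply₂₂, Matrix.neg_apply, Matrix.map_apply,
        e2_inr, Matrix.zero_apply, Matrix.diagonal_apply, Sum.inl.injEq, Sum.inr.injEq]
      by_cases hqr : q = r <;>
        simp [hent, quatX, quatY, qi_mul_re, qi_mul_imI, qi_mul_imJ, qi_mul_imK, qj_mul_re, qj_mul_imI, qj_mul_imJ, qj_mul_imK, qi_re, qi_imI, qi_imJ, qi_imK, qj_re, qj_imI, qj_imJ, qj_imK, e2_inl_0, e2_inl_1, blockA, dvec, hne0, hne1, hne0', hne1', hi2eq, h01, h10, hqr,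
          Complex.ext_iff, Matrix.fromBlocks]
    · simp only [Matrix.reindex_apply, Matrix.submatrix_apply, eAll_symm_ll, eAll_symm_lr,
        eAll_symm_rl, eAll_symm_rr, dpi, Matrix.fromBlocks_apply₁₁, Matrix.fromBlocks_apply₁₂,
        Matrix.fromBlocks_apply₂₁, Matrix.fromBlocks_apply₂₂, Matrix.neg_apply, Matrix.map_apply,
        e2_inr, Matrix.zero_apply, Matrix.diagonal_apply, Sum.inl.injEq, Sum.inr.injEq]
      fin_cases j <;> simp [hent, quatX, quatY, qi, qj, e2_inl_0, e2_inl_1, blockA, dvec, hne0, hne1, hne0', hne1', hi2eq, h01, h10,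
          Complex.ext_iff, Matrix.fromBlocks]
    · simp only [Matrix.reindex_apply, Matrix.submatrix_apply, eAll_symm_ll, eAll_symm_lr,
        eAll_symm_rl, eAll_symm_rr, dpi, Matrix.fromBlocks_apply₁₁, Matrix.fromBlocks_apply₁₂,
        Matrix.fromBlocks_apply₂₁, Matrix.fromBlocks_apply₂₂, Matrix.neg_apply, Matrix.map_apply,
        e2_inr, Matrix.zero_apply, Matrix.diagonal_apply, Sum.inl.injEq, Sum.inr.injEq]
      fin_cases j <;> simp [hent, quatX, quatY, qi, qj, e2_inl_0, e2_inl_1, blockA, dvec, hne0, hne1, hne0', hne1', hi2eq, h01, h10,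
          Complex.ext_iff, Matrix.fromBlocks]
    · simp only [Matrix.reindex_apply, Matrix.submatrix_apply, eAll_symm_ll, eAll_symm_lr,
        eAll_symm_rl, eAll_symm_rr, dpi, Matrix.fromBlocks_apply₁₁, Matrix.fromBlocks_apply₁₂,
        Matrix.fromBlocks_apply₂₁, Matrix.fromBlocks_apply₂₂, Matrix.neg_apply, Matrix.map_apply,
        e2_inr, Matrix.zero_apply, Matrix.diagonal_apply, Sum.inl.injEq, Sum.inr.injEq]
      by_cases hqr : q = r <;>
        simp [hent, quatX, quatY, qi_mul_re, qi_mul_imI, qi_mul_imJ, qi_mul_imK, qj_mul_re, qj_mul_imI, qj_mul_imJ, qj_mul_imK, qi_re, qi_imI, qi_imJ, qi_imK, qj_re, qj_imI, qj_imJ, qj_imK, e2_inl_0, e2_inl_1, blockA, dvec, hne0, hne1, hne0', hne1', hi2eq, h01, h10, hqr,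
          Complex.ext_iff, Matrix.fromBlocks]
    · simp only [Matrix.reindex_apply, Matrix.submatrix_apply, eAll_symm_ll, eAll_symm_lr,
        eAll_symm_rl, eAll_symm_rr, dpi, Matrix.fromBlocks_apply₁₁, Matrix.fromBlocks_apply₁₂,
        Matrix.fromBlocks_apply₂₁, Matrix.fromBlocks_apply₂₂, Matrix.neg_apply, Matrix.map_apply,
        e2_inr, Matrix.zero_apply, Matrix.diagonal_apply, Sum.inl.injEq, Sum.inr.injEq]
      by_cases hqr : q = r <;>
        simp [hent, quatX, quatY, qi_mul_re, qi_mul_imI, qi_mul_imJ, qi_mul_imK, qj_mul_re, qj_mul_imI, qj_mul_imJ, qj_mul_imK, qi_re, qi_imI, qi_imJ, qi_imK, qj_re, qj_imI, qj_imJ, qj_imK, e2_inl_0, e2_inl_1, blockA, dvec, hne0, hne1, hne0', hne1', hi2eq, h01, h10, hqr,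
          Complex.ext_iff, Matrix.fromBlocks]
  rw [hblock, Matrix.charpoly_fromBlocks_zero₂₁, blockA_charpoly, dvec_charpoly]
  have hs : ((Real.sqrt 2 : ℝ) : ℂ) ≠ 0 := by
    simp [Real.sqrt_eq_zero']
  have hA : (2*(ct:ℂ)^2+((dt*Real.sqrt 2:ℝ):ℂ)^2+((t*dt*Real.sqrt 2:ℝ):ℂ)^2)
      = ((2*(ct^2+dt^2+dt^2*t^2):ℝ):ℂ) := by
    push_cast
    linear_combination ((dt:ℂ)^2 + (t:ℂ)^2*(dt:ℂ)^2) * hc2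
  have hB : ((ct:ℂ)^2+((dt*Real.sqrt 2:ℝ):ℂ)*((t*dt*Real.sqrt 2:ℝ):ℂ))^2
      = (((ct^2+2*dt^2*t)^2:ℝ):ℂ) := by
    push_cast
    linear_combination ((dt:ℂ)^2*(t:ℂ)*(2*(ct:ℂ)^2 + (((Real.sqrt 2:ℝ):ℂ)^2+2)*(dt:ℂ)^2*(t:ℂ))) * hc2
  rw [hA, hB]
  congr 1
  have hval : ∀ p : Fin (m+2), p ∈ (Finset.univ \ ({0,1} : Finset (Fin (m+2)))) → 2 ≤ p.1 := by
    intro p hp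
    simp only [Finset.mem_sdiff, Finset.mem_univ, Finset.mem_insert, Finset.mem_singleton,
      true_and, not_or] at hp
    obtain ⟨h0, h1⟩ := hp
    have hv0 : p.1 ≠ 0 := by
      intro h
      exact h0 (Fin.ext (by simp only [Fin.val_zero]; omega))
    have hv1 : p.1 ≠ 1 := by
      intro h
      exact h1 (Fin.ext (by simp only [Fin.val_one]; omega))
    omega
  refine Finset.prod_bij' (fun q _ => i2 m q)
    (fun p hp => (⟨p.1 - 2, by have := hval p hp; have := p.2; omega⟩ : Fin m)) ?_ ?_ ?_ ?_ ?_
  · intro q _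
    simp only [Finset.mem_sdiff, Finset.mem_univ, Finset.mem_insert, Finset.mem_singleton,
      true_and]
    rintro (h|h) <;> have := congrArg Fin.val h <;>
      simp only [i2, Fin.val_zero, Fin.val_one] at this <;> omega
  · intro p _; exact Finset.mem_univ _
  · intro q _; apply Fin.ext; simp [i2]
  · intro p hp
    have := hval p hp
    apply Fin.ext
    simp only [i2]
    omega
  · intro q _; rfl
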